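/- arXiv:2106.02033 — 3 statements merged into one kernel-verified Lean document; each statement's English description precedes it below -/
import Mathlib

section
/- Let ζ = e^{2πi/17} and ξ_k = ζ^k + ζ^{−k}. Let M₂ be the 9×9 complex matrix equal to (−1/√17) times the matrix whose first row is (1,1,1,1,1,1,1,1,1), whose first column below the top entry is all 2's, and whose lower-right 8×8 block is the circulant with first row (ξ₃, ξ₈, ξ₇, ξ₄, ξ₅, ξ₂, ξ₆, ξ₁) (each subsequent row cyclically shifted left by one). Then the quadratic form Q(x₀,…,x₈) = x₀² + x₁x₅ + x₂x₆ + x₃x₇ + x₄x₈ satisfies Q(M₂·x) = Q(x) for all x ∈ ℂ⁹. -/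
set_option maxHeartbeats 2000000


open Matrix Real Complex

private theorem sum_univ_nine' (f : Fin 9 → ℂ) :
    ∑ i, f i = f 0 + f 1 + f 2 + f 3 + f 4 + f 5 + f 6 + f 7 + f 8 := by
  rw [Fin.sum_univ_castSucc, Fin.sum_univ_eight]
  rfl

/-- The quadratic form `Q(x₀,…,x₈) = x₀² + x₁x₅ + x₂x₆ + x₃x₇ + x₄x₈` is
invariant under the matrix `M₂`. -/
theorem Q_invariant_M2 (ζ : ℂ) (hζ : ζ = Complex.exp (2 * Real.pi * Complex.I / 17))
    (ξ : ℕ → ℂ) (hξ : ∀ k, ξ k = ζ ^ k + ζ ^ (-(k : ℤ)))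
    (M : Matrix (Fin 9) (Fin 9) ℂ)
    (hM : M = ((-1 : ℂ) / (Real.sqrt 17 : ℂ)) •
      !![1,   1,   1,   1,   1,   1,   1,   1,   1;
         2, ξ 3, ξ 8, ξ 7, ξ 4, ξ 5, ξ 2, ξ 6, ξ 1;
         2, ξ 8, ξ 7, ξ 4, ξ 5, ξ 2, ξ 6, ξ 1, ξ 3;
         2, ξ 7, ξ 4, ξ 5, ξ 2, ξ 6, ξ 1, ξ 3, ξ 8;
         2, ξ 4, ξ 5, ξ 2, ξ 6, ξ 1, ξ 3, ξ 8, ξ 7;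
         2, ξ 5, ξ 2, ξ 6, ξ 1, ξ 3, ξ 8, ξ 7, ξ 4;
         2, ξ 2, ξ 6, ξ 1, ξ 3, ξ 8, ξ 7, ξ 4, ξ 5;
         2, ξ 6, ξ 1, ξ 3, ξ 8, ξ 7, ξ 4, ξ 5, ξ 2;
         2, ξ 1, ξ 3, ξ 8, ξ 7, ξ 4, ξ 5, ξ 2, ξ 6]) :
    ∀ x : Fin 9 → ℂ,
      (M.mulVec x 0)^2 + (M.mulVec x 1) * (M.mulVec x 5)
        + (M.mulVec x 2) * (M.mulVec x 6) + (M.mulVec x 3) * (M.mulVec x 7)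
        + (M.mulVec x 4) * (M.mulVec x 8)
      = (x 0)^2 + (x 1) * (x 5) + (x 2) * (x 6) + (x 3) * (x 7)
        + (x 4) * (x 8) := by
  intro x
  have hz17 : ζ ^ 17 = 1 := by
    rw [hζ, ← Complex.exp_nat_mul]
    rw [show (17:ℕ) * (2 * (Real.pi:ℂ) * Complex.I / 17) = 2 * Real.pi * Complex.I by push_cast; ring]
    exact Complex.exp_two_pi_mul_I
  have hzne1 : ζ ≠ 1 := by
    rw [hζ, ne_eq, Complex.exp_eq_one_iff]
    rintro ⟨n, hn⟩
    have h2 : (2 * (Real.pi:ℂ) * Complex.I) ≠ 0 := by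
      simp [Real.pi_ne_zero, Complex.I_ne_zero]
    have h3 : (2 * (Real.pi:ℂ) * Complex.I) * (1/17) = (2 * (Real.pi:ℂ) * Complex.I) * n := by
      linear_combination hn
    have h4 : (1:ℂ)/17 = n := mul_left_cancel₀ h2 h3
    have h5 : (17:ℂ) * n = 1 := by rw [← h4]; ring
    have h6 : (17 * n : ℤ) = 1 := by exact_mod_cast h5
    omega
  have hS : 1 + ζ + ζ^2 + ζ^3 + ζ^4 + ζ^5 + ζ^6 + ζ^7 + ζ^8 + ζ^9 + ζ^10 + ζ^11 + ζ^12 + ζ^13 + ζ^14 + ζ^15 + ζ^16 = 0 := by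
    have factor : (ζ - 1) * (1 + ζ + ζ^2 + ζ^3 + ζ^4 + ζ^5 + ζ^6 + ζ^7 + ζ^8 + ζ^9 + ζ^10 + ζ^11 + ζ^12 + ζ^13 + ζ^14 + ζ^15 + ζ^16) = ζ^17 - 1 := by ring
    rw [hz17, sub_self] at factor
    exact (mul_eq_zero.1 factor).resolve_left (sub_ne_zero.2 hzne1)
  have hinv : ∀ k : ℕ, k ≤ 17 → ζ ^ (-(k:ℤ)) = ζ ^ (17 - k) := by
    intro k hk
    rw [_root_.zpow_neg, zpow_natCast]
    refine inv_eq_of_mul_eq_one_right ?_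
    rw [← pow_add, show k + (17 - k) = 17 from by omega]
    exact hz17
  have g1_1 : ∀ (a : ℂ) (s : Fin 1 → ℂ), Matrix.vecCons a s (1 : Fin 2) = s 0 := fun _ _ => rfl
  have g2_1 : ∀ (a : ℂ) (s : Fin 2 → ℂ), Matrix.vecCons a s (1 : Fin 3) = s 0 := fun _ _ => rfl
  have g2_2 : ∀ (a : ℂ) (s : Fin 2 → ℂ), Matrix.vecCons a s (2 : Fin 3) = s 1 := fun _ _ => rfl
  have g3_1 : ∀ (a : ℂ) (s : Fin 3 → ℂ), Matrix.vecCons a s (1 : Fin 4) = s 0 := fun _ _ => rfl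
  have g3_2 : ∀ (a : ℂ) (s : Fin 3 → ℂ), Matrix.vecCons a s (2 : Fin 4) = s 1 := fun _ _ => rfl
  have g3_3 : ∀ (a : ℂ) (s : Fin 3 → ℂ), Matrix.vecCons a s (3 : Fin 4) = s 2 := fun _ _ => rfl
  have g4_1 : ∀ (a : ℂ) (s : Fin 4 → ℂ), Matrix.vecCons a s (1 : Fin 5) = s 0 := fun _ _ => rfl
  have g4_2 : ∀ (a : ℂ) (s : Fin 4 → ℂ), Matrix.vecCons a s (2 : Fin 5) = s 1 := fun _ _ => rfl
  have g4_3 : ∀ (a : ℂ) (s : Fin 4 → ℂ), Matrix.vecCons a s (3 : Fin 5) = s 2 := fun _ _ => rfl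
  have g4_4 : ∀ (a : ℂ) (s : Fin 4 → ℂ), Matrix.vecCons a s (4 : Fin 5) = s 3 := fun _ _ => rfl
  have g5_1 : ∀ (a : ℂ) (s : Fin 5 → ℂ), Matrix.vecCons a s (1 : Fin 6) = s 0 := fun _ _ => rfl
  have g5_2 : ∀ (a : ℂ) (s : Fin 5 → ℂ), Matrix.vecCons a s (2 : Fin 6) = s 1 := fun _ _ => rfl
  have g5_3 : ∀ (a : ℂ) (s : Fin 5 → ℂ), Matrix.vecCons a s (3 : Fin 6) = s 2 := fun _ _ => rfl
  have g5_4 : ∀ (a : ℂ) (s : Fin 5 → ℂ), Matrix.vecCons a s (4 : Fin 6) = s 3 := fun _ _ => rfl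
  have g5_5 : ∀ (a : ℂ) (s : Fin 5 → ℂ), Matrix.vecCons a s (5 : Fin 6) = s 4 := fun _ _ => rfl
  have g6_1 : ∀ (a : ℂ) (s : Fin 6 → ℂ), Matrix.vecCons a s (1 : Fin 7) = s 0 := fun _ _ => rfl
  have g6_2 : ∀ (a : ℂ) (s : Fin 6 → ℂ), Matrix.vecCons a s (2 : Fin 7) = s 1 := fun _ _ => rfl
  have g6_3 : ∀ (a : ℂ) (s : Fin 6 → ℂ), Matrix.vecCons a s (3 : Fin 7) = s 2 := fun _ _ => rfl
  have g6_4 : ∀ (a : ℂ) (s : Fin 6 → ℂ), Matrix.vecCons a s (4 : Fin 7) = s 3 := fun _ _ => rfl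
  have g6_5 : ∀ (a : ℂ) (s : Fin 6 → ℂ), Matrix.vecCons a s (5 : Fin 7) = s 4 := fun _ _ => rfl
  have g6_6 : ∀ (a : ℂ) (s : Fin 6 → ℂ), Matrix.vecCons a s (6 : Fin 7) = s 5 := fun _ _ => rfl
  have g7_1 : ∀ (a : ℂ) (s : Fin 7 → ℂ), Matrix.vecCons a s (1 : Fin 8) = s 0 := fun _ _ => rfl
  have g7_2 : ∀ (a : ℂ) (s : Fin 7 → ℂ), Matrix.vecCons a s (2 : Fin 8) = s 1 := fun _ _ => rfl
  have g7_3 : ∀ (a : ℂ) (s : Fin 7 → ℂ), Matrix.vecCons a s (3 : Fin 8) = s 2 := fun _ _ => rfl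
  have g7_4 : ∀ (a : ℂ) (s : Fin 7 → ℂ), Matrix.vecCons a s (4 : Fin 8) = s 3 := fun _ _ => rfl
  have g7_5 : ∀ (a : ℂ) (s : Fin 7 → ℂ), Matrix.vecCons a s (5 : Fin 8) = s 4 := fun _ _ => rfl
  have g7_6 : ∀ (a : ℂ) (s : Fin 7 → ℂ), Matrix.vecCons a s (6 : Fin 8) = s 5 := fun _ _ => rfl
  have g7_7 : ∀ (a : ℂ) (s : Fin 7 → ℂ), Matrix.vecCons a s (7 : Fin 8) = s 6 := fun _ _ => rfl
  have g8_1 : ∀ (a : ℂ) (s : Fin 8 → ℂ), Matrix.vecCons a s (1 : Fin 9) = s 0 := fun _ _ => rfl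
  have g8_2 : ∀ (a : ℂ) (s : Fin 8 → ℂ), Matrix.vecCons a s (2 : Fin 9) = s 1 := fun _ _ => rfl
  have g8_3 : ∀ (a : ℂ) (s : Fin 8 → ℂ), Matrix.vecCons a s (3 : Fin 9) = s 2 := fun _ _ => rfl
  have g8_4 : ∀ (a : ℂ) (s : Fin 8 → ℂ), Matrix.vecCons a s (4 : Fin 9) = s 3 := fun _ _ => rfl
  have g8_5 : ∀ (a : ℂ) (s : Fin 8 → ℂ), Matrix.vecCons a s (5 : Fin 9) = s 4 := fun _ _ => rfl
  have g8_6 : ∀ (a : ℂ) (s : Fin 8 → ℂ), Matrix.vecCons a s (6 : Fin 9) = s 5 := fun _ _ => rfl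
  have g8_7 : ∀ (a : ℂ) (s : Fin 8 → ℂ), Matrix.vecCons a s (7 : Fin 9) = s 6 := fun _ _ => rfl
  have g8_8 : ∀ (a : ℂ) (s : Fin 8 → ℂ), Matrix.vecCons a s (8 : Fin 9) = s 7 := fun _ _ => rfl
  have e1 : ξ 1 = ζ^1 + ζ^16 := by rw [hξ, hinv 1 (by norm_num)]
  have e2 : ξ 2 = ζ^2 + ζ^15 := by rw [hξ, hinv 2 (by norm_num)]
  have e3 : ξ 3 = ζ^3 + ζ^14 := by rw [hξ, hinv 3 (by norm_num)]
  have e4 : ξ 4 = ζ^4 + ζ^13 := by rw [hξ, hinv 4 (by norm_num)]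
  have e5 : ξ 5 = ζ^5 + ζ^12 := by rw [hξ, hinv 5 (by norm_num)]
  have e6 : ξ 6 = ζ^6 + ζ^11 := by rw [hξ, hinv 6 (by norm_num)]
  have e7 : ξ 7 = ζ^7 + ζ^10 := by rw [hξ, hinv 7 (by norm_num)]
  have e8 : ξ 8 = ζ^8 + ζ^9 := by rw [hξ, hinv 8 (by norm_num)]
  have m0 : M.mulVec x 0 = ((-1:ℂ)/(Real.sqrt 17:ℂ)) * (x 0 + x 1 + x 2 + x 3 + x 4 + x 5 + x 6 + x 7 + x 8) := by
    rw [hM]; simp [Matrix.mulVec, dotProduct, sum_univ_nine', g1_1,g2_1,g2_2,g3_1,g3_2,g3_3,g4_1,g4_2,g4_3,g4_4,g5_1,g5_2,g5_3,g5_4,g5_5,g6_1,g6_2,g6_3,g6_4,g6_5,g6_6,g7_1,g7_2,g7_3,g7_4,g7_5,g7_6,g7_7,g8_1,g8_2,g8_3,g8_4,g8_5,g8_6,g8_7,g8_8, e1,e2,e3,e4,e5,e6,e7,e8]; ring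
  have m1 : M.mulVec x 1 = ((-1:ℂ)/(Real.sqrt 17:ℂ)) * (2 * x 0 + (ζ^3 + ζ^14) * x 1 + (ζ^8 + ζ^9) * x 2 + (ζ^7 + ζ^10) * x 3 + (ζ^4 + ζ^13) * x 4 + (ζ^5 + ζ^12) * x 5 + (ζ^2 + ζ^15) * x 6 + (ζ^6 + ζ^11) * x 7 + (ζ^1 + ζ^16) * x 8) := by
    rw [hM]; simp [Matrix.mulVec, dotProduct, sum_univ_nine', g1_1,g2_1,g2_2,g3_1,g3_2,g3_3,g4_1,g4_2,g4_3,g4_4,g5_1,g5_2,g5_3,g5_4,g5_5,g6_1,g6_2,g6_3,g6_4,g6_5,g6_6,g7_1,g7_2,g7_3,g7_4,g7_5,g7_6,g7_7,g8_1,g8_2,g8_3,g8_4,g8_5,g8_6,g8_7,g8_8, e1,e2,e3,e4,e5,e6,e7,e8]; ring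
  have m2 : M.mulVec x 2 = ((-1:ℂ)/(Real.sqrt 17:ℂ)) * (2 * x 0 + (ζ^8 + ζ^9) * x 1 + (ζ^7 + ζ^10) * x 2 + (ζ^4 + ζ^13) * x 3 + (ζ^5 + ζ^12) * x 4 + (ζ^2 + ζ^15) * x 5 + (ζ^6 + ζ^11) * x 6 + (ζ^1 + ζ^16) * x 7 + (ζ^3 + ζ^14) * x 8) := by
    rw [hM]; simp [Matrix.mulVec, dotProduct, sum_univ_nine', g1_1,g2_1,g2_2,g3_1,g3_2,g3_3,g4_1,g4_2,g4_3,g4_4,g5_1,g5_2,g5_3,g5_4,g5_5,g6_1,g6_2,g6_3,g6_4,g6_5,g6_6,g7_1,g7_2,g7_3,g7_4,g7_5,g7_6,g7_7,g8_1,g8_2,g8_3,g8_4,g8_5,g8_6,g8_7,g8_8, e1,e2,e3,e4,e5,e6,e7,e8]; ring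
  have m3 : M.mulVec x 3 = ((-1:ℂ)/(Real.sqrt 17:ℂ)) * (2 * x 0 + (ζ^7 + ζ^10) * x 1 + (ζ^4 + ζ^13) * x 2 + (ζ^5 + ζ^12) * x 3 + (ζ^2 + ζ^15) * x 4 + (ζ^6 + ζ^11) * x 5 + (ζ^1 + ζ^16) * x 6 + (ζ^3 + ζ^14) * x 7 + (ζ^8 + ζ^9) * x 8) := by
    rw [hM]; simp [Matrix.mulVec, dotProduct, sum_univ_nine', g1_1,g2_1,g2_2,g3_1,g3_2,g3_3,g4_1,g4_2,g4_3,g4_4,g5_1,g5_2,g5_3,g5_4,g5_5,g6_1,g6_2,g6_3,g6_4,g6_5,g6_6,g7_1,g7_2,g7_3,g7_4,g7_5,g7_6,g7_7,g8_1,g8_2,g8_3,g8_4,g8_5,g8_6,g8_7,g8_8, e1,e2,e3,e4,e5,e6,e7,e8]; ring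
  have m4 : M.mulVec x 4 = ((-1:ℂ)/(Real.sqrt 17:ℂ)) * (2 * x 0 + (ζ^4 + ζ^13) * x 1 + (ζ^5 + ζ^12) * x 2 + (ζ^2 + ζ^15) * x 3 + (ζ^6 + ζ^11) * x 4 + (ζ^1 + ζ^16) * x 5 + (ζ^3 + ζ^14) * x 6 + (ζ^8 + ζ^9) * x 7 + (ζ^7 + ζ^10) * x 8) := by
    rw [hM]; simp [Matrix.mulVec, dotProduct, sum_univ_nine', g1_1,g2_1,g2_2,g3_1,g3_2,g3_3,g4_1,g4_2,g4_3,g4_4,g5_1,g5_2,g5_3,g5_4,g5_5,g6_1,g6_2,g6_3,g6_4,g6_5,g6_6,g7_1,g7_2,g7_3,g7_4,g7_5,g7_6,g7_7,g8_1,g8_2,g8_3,g8_4,g8_5,g8_6,g8_7,g8_8, e1,e2,e3,e4,e5,e6,e7,e8]; ring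
  have m5 : M.mulVec x 5 = ((-1:ℂ)/(Real.sqrt 17:ℂ)) * (2 * x 0 + (ζ^5 + ζ^12) * x 1 + (ζ^2 + ζ^15) * x 2 + (ζ^6 + ζ^11) * x 3 + (ζ^1 + ζ^16) * x 4 + (ζ^3 + ζ^14) * x 5 + (ζ^8 + ζ^9) * x 6 + (ζ^7 + ζ^10) * x 7 + (ζ^4 + ζ^13) * x 8) := by
    rw [hM]; simp [Matrix.mulVec, dotProduct, sum_univ_nine', g1_1,g2_1,g2_2,g3_1,g3_2,g3_3,g4_1,g4_2,g4_3,g4_4,g5_1,g5_2,g5_3,g5_4,g5_5,g6_1,g6_2,g6_3,g6_4,g6_5,g6_6,g7_1,g7_2,g7_3,g7_4,g7_5,g7_6,g7_7,g8_1,g8_2,g8_3,g8_4,g8_5,g8_6,g8_7,g8_8, e1,e2,e3,e4,e5,e6,e7,e8]; ring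
  have m6 : M.mulVec x 6 = ((-1:ℂ)/(Real.sqrt 17:ℂ)) * (2 * x 0 + (ζ^2 + ζ^15) * x 1 + (ζ^6 + ζ^11) * x 2 + (ζ^1 + ζ^16) * x 3 + (ζ^3 + ζ^14) * x 4 + (ζ^8 + ζ^9) * x 5 + (ζ^7 + ζ^10) * x 6 + (ζ^4 + ζ^13) * x 7 + (ζ^5 + ζ^12) * x 8) := by
    rw [hM]; simp [Matrix.mulVec, dotProduct, sum_univ_nine', g1_1,g2_1,g2_2,g3_1,g3_2,g3_3,g4_1,g4_2,g4_3,g4_4,g5_1,g5_2,g5_3,g5_4,g5_5,g6_1,g6_2,g6_3,g6_4,g6_5,g6_6,g7_1,g7_2,g7_3,g7_4,g7_5,g7_6,g7_7,g8_1,g8_2,g8_3,g8_4,g8_5,g8_6,g8_7,g8_8, e1,e2,e3,e4,e5,e6,e7,e8]; ring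
  have m7 : M.mulVec x 7 = ((-1:ℂ)/(Real.sqrt 17:ℂ)) * (2 * x 0 + (ζ^6 + ζ^11) * x 1 + (ζ^1 + ζ^16) * x 2 + (ζ^3 + ζ^14) * x 3 + (ζ^8 + ζ^9) * x 4 + (ζ^7 + ζ^10) * x 5 + (ζ^4 + ζ^13) * x 6 + (ζ^5 + ζ^12) * x 7 + (ζ^2 + ζ^15) * x 8) := by
    rw [hM]; simp [Matrix.mulVec, dotProduct, sum_univ_nine', g1_1,g2_1,g2_2,g3_1,g3_2,g3_3,g4_1,g4_2,g4_3,g4_4,g5_1,g5_2,g5_3,g5_4,g5_5,g6_1,g6_2,g6_3,g6_4,g6_5,g6_6,g7_1,g7_2,g7_3,g7_4,g7_5,g7_6,g7_7,g8_1,g8_2,g8_3,g8_4,g8_5,g8_6,g8_7,g8_8, e1,e2,e3,e4,e5,e6,e7,e8]; ring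
  have m8 : M.mulVec x 8 = ((-1:ℂ)/(Real.sqrt 17:ℂ)) * (2 * x 0 + (ζ^1 + ζ^16) * x 1 + (ζ^3 + ζ^14) * x 2 + (ζ^8 + ζ^9) * x 3 + (ζ^7 + ζ^10) * x 4 + (ζ^4 + ζ^13) * x 5 + (ζ^5 + ζ^12) * x 6 + (ζ^2 + ζ^15) * x 7 + (ζ^6 + ζ^11) * x 8) := by
    rw [hM]; simp [Matrix.mulVec, dotProduct, sum_univ_nine', g1_1,g2_1,g2_2,g3_1,g3_2,g3_3,g4_1,g4_2,g4_3,g4_4,g5_1,g5_2,g5_3,g5_4,g5_5,g6_1,g6_2,g6_3,g6_4,g6_5,g6_6,g7_1,g7_2,g7_3,g7_4,g7_5,g7_6,g7_7,g8_1,g8_2,g8_3,g8_4,g8_5,g8_6,g8_7,g8_8, e1,e2,e3,e4,e5,e6,e7,e8]; ring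
  have hr2 : (((-1:ℂ)/(Real.sqrt 17:ℂ)))^2 = 1/17 := by
    have h17 : ((Real.sqrt 17 : ℝ) : ℂ)^2 = 17 := by
      norm_cast
      exact Real.sq_sqrt (by norm_num)
    rw [div_pow, h17]; norm_num
  have key : (x 0 + x 1 + x 2 + x 3 + x 4 + x 5 + x 6 + x 7 + x 8)^2 + (2 * x 0 + (ζ^3 + ζ^14) * x 1 + (ζ^8 + ζ^9) * x 2 + (ζ^7 + ζ^10) * x 3 + (ζ^4 + ζ^13) * x 4 + (ζ^5 + ζ^12) * x 5 + (ζ^2 + ζ^15) * x 6 + (ζ^6 + ζ^11) * x 7 + (ζ^1 + ζ^16) * x 8) * (2 * x 0 + (ζ^5 + ζ^12) * x 1 + (ζ^2 + ζ^15) * x 2 + (ζ^6 + ζ^11) * x 3 + (ζ^1 + ζ^16) * x 4 + (ζ^3 + ζ^14) * x 5 + (ζ^8 + ζ^9) * x 6 + (ζ^7 + ζ^10) * x 7 + (ζ^4 + ζ^13) * x 8) + (2 * x 0 + (ζ^8 + ζ^9) * x 1 + (ζ^7 + ζ^10) * x 2 + (ζ^4 + ζ^13) * x 3 + (ζ^5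 + ζ^12) * x 4 + (ζ^2 + ζ^15) * x 5 + (ζ^6 + ζ^11) * x 6 + (ζ^1 + ζ^16) * x 7 + (ζ^3 + ζ^14) * x 8) * (2 * x 0 + (ζ^2 + ζ^15) * x 1 + (ζ^6 + ζ^11) * x 2 + (ζ^1 + ζ^16) * x 3 + (ζ^3 + ζ^14) * x 4 + (ζ^8 + ζ^9) * x 5 + (ζ^7 + ζ^10) * x 6 + (ζ^4 + ζ^13) * x 7 + (ζ^5 + ζ^12) * x 8) + (2 * x 0 + (ζ^7 + ζ^10) * x 1 + (ζ^4 + ζ^13) * x 2 + (ζ^5 + ζ^12) * x 3 + (ζ^2 + ζ^15) * x 4 + (ζ^6 + ζ^11) * x 5 + (ζ^1 + ζ^16) * x 6 + (ζ^3 + ζ^14) * x 7 + (ζ^8 + ζ^9) * x 8) * (2 * x 0 + (ζ^6 + ζ^11) * x 1 + (ζ^1 + ζ^16) * x 2 + (ζ^3 + ζ^14) * x 3 + (ζ^8 + ζ^9) * x 4 + (ζ^7 + ζ^10) * x 5 + (ζ^4 + ζ^13) * x 6 + (ζ^5 + ζ^12) * x 7 + (ζ^2 + ζ^15) * x 8)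 + (2 * x 0 + (ζ^4 + ζ^13) * x 1 + (ζ^5 + ζ^12) * x 2 + (ζ^2 + ζ^15) * x 3 + (ζ^6 + ζ^11) * x 4 + (ζ^1 + ζ^16) * x 5 + (ζ^3 + ζ^14) * x 6 + (ζ^8 + ζ^9) * x 7 + (ζ^7 + ζ^10) * x 8) * (2 * x 0 + (ζ^1 + ζ^16) * x 1 + (ζ^3 + ζ^14) * x 2 + (ζ^8 + ζ^9) * x 3 + (ζ^7 + ζ^10) * x 4 + (ζ^4 + ζ^13) * x 5 + (ζ^5 + ζ^12) * x 6 + (ζ^2 + ζ^15) * x 7 + (ζ^6 + ζ^11) * x 8) = 17 * ((x 0)^2 + (x 1) * (x 5) + (x 2) * (x 6) + (x 3) * (x 7) + (x 4) * (x 8)) := by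
    linear_combination ((x 0 * x 1) * ((2:ℂ)) + (x 0 * x 2) * ((2:ℂ)) + (x 0 * x 3) * ((2:ℂ)) + (x 0 * x 4) * ((2:ℂ)) + (x 0 * x 5) * ((2:ℂ)) + (x 0 * x 6) * ((2:ℂ)) + (x 0 * x 7) * ((2:ℂ)) + (x 0 * x 8) * ((2:ℂ)) + (x 1 * x 1) * ((1:ℂ) + (-1:ℂ) * ζ + (1:ℂ) * ζ^5 + (-1:ℂ) * ζ^6 + (1:ℂ) * ζ^8 + (-1:ℂ) * ζ^9 + (1:ℂ) * ζ^10 + (-1:ℂ) * ζ^12 + (1:ℂ) * ζ^13) + (x 1 * x 2) * ((2:ℂ) + (-2:ℂ) * ζ + (1:ℂ) * ζ^5 + (1:ℂ) * ζ^13) + (x 1 * x 3) * ((2:ℂ) + (-2:ℂ) * ζ + (1:ℂ) * ζ^3 + (-1:ℂ) * ζ^4 + (1:ℂ) * ζ^6 + (-1:ℂ) * ζ^7 + (2:ℂ) * ζ^9 + (-1:ℂ) * ζ^11 + (1:ℂ) * ζ^12 + (-1:ℂ) * ζ^14 + (1:ℂ) * ζ^15) + (x 1 * x 4) * ((2:ℂ)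 + (-2:ℂ) * ζ + (1:ℂ) * ζ^4 + (-1:ℂ) * ζ^5 + (2:ℂ) * ζ^7 + (-1:ℂ) * ζ^8 + (-1:ℂ) * ζ^10 + (2:ℂ) * ζ^11 + (-1:ℂ) * ζ^13 + (1:ℂ) * ζ^14) + (x 1 * x 5) * ((-15:ℂ) + (15:ℂ) * ζ + (1:ℂ) * ζ^2 + (-1:ℂ) * ζ^3 + (1:ℂ) * ζ^4 + (-1:ℂ) * ζ^5 + (1:ℂ) * ζ^6 + (-1:ℂ) * ζ^7 + (1:ℂ) * ζ^8 + (-1:ℂ) * ζ^9 + (1:ℂ) * ζ^10 + (-1:ℂ) * ζ^11 + (1:ℂ) * ζ^12 + (-1:ℂ) * ζ^13 + (1:ℂ) * ζ^14 + (-1:ℂ) * ζ^15 + (1:ℂ) * ζ^16) + (x 1 * x 6) * ((2:ℂ) + (-2:ℂ) * ζ + (1:ℂ) * ζ^4 + (-1:ℂ) * ζ^5 + (2:ℂ) * ζ^7 + (-1:ℂ) * ζ^8 + (-1:ℂ) * ζ^10 + (2:ℂ) * ζ^11 + (-1:ℂ) * ζ^13 + (1:ℂ) * ζ^14) + (x 1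 * x 7) * ((2:ℂ) + (-2:ℂ) * ζ + (1:ℂ) * ζ^3 + (-1:ℂ) * ζ^4 + (1:ℂ) * ζ^6 + (-1:ℂ) * ζ^7 + (2:ℂ) * ζ^9 + (-1:ℂ) * ζ^11 + (1:ℂ) * ζ^12 + (-1:ℂ) * ζ^14 + (1:ℂ) * ζ^15) + (x 1 * x 8) * ((2:ℂ) + (-2:ℂ) * ζ + (1:ℂ) * ζ^5 + (1:ℂ) * ζ^13) + (x 2 * x 2) * ((1:ℂ) + (-1:ℂ) * ζ + (1:ℂ) * ζ^5 + (-1:ℂ) * ζ^6 + (1:ℂ) * ζ^8 + (-1:ℂ) * ζ^9 + (1:ℂ) * ζ^10 + (-1:ℂ) * ζ^12 + (1:ℂ) * ζ^13) + (x 2 * x 3) * ((2:ℂ) + (-2:ℂ) * ζ + (1:ℂ) * ζ^5 + (1:ℂ) * ζ^13) + (x 2 * x 4) * ((2:ℂ) + (-2:ℂ) * ζ + (1:ℂ) * ζ^3 + (-1:ℂ) * ζ^4 + (1:ℂ) * ζ^6 + (-1:ℂ) * ζ^7 + (2:ℂ) * ζ^9 + (-1:ℂ) * ζ^11 + (1:ℂ)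 * ζ^12 + (-1:ℂ) * ζ^14 + (1:ℂ) * ζ^15) + (x 2 * x 5) * ((2:ℂ) + (-2:ℂ) * ζ + (1:ℂ) * ζ^4 + (-1:ℂ) * ζ^5 + (2:ℂ) * ζ^7 + (-1:ℂ) * ζ^8 + (-1:ℂ) * ζ^10 + (2:ℂ) * ζ^11 + (-1:ℂ) * ζ^13 + (1:ℂ) * ζ^14) + (x 2 * x 6) * ((-15:ℂ) + (15:ℂ) * ζ + (1:ℂ) * ζ^2 + (-1:ℂ) * ζ^3 + (1:ℂ) * ζ^4 + (-1:ℂ) * ζ^5 + (1:ℂ) * ζ^6 + (-1:ℂ) * ζ^7 + (1:ℂ) * ζ^8 + (-1:ℂ) * ζ^9 + (1:ℂ) * ζ^10 + (-1:ℂ) * ζ^11 + (1:ℂ) * ζ^12 + (-1:ℂ) * ζ^13 + (1:ℂ) * ζ^14 + (-1:ℂ) * ζ^15 + (1:ℂ) * ζ^16) + (x 2 * x 7) * ((2:ℂ) + (-2:ℂ) * ζ + (1:ℂ) * ζ^4 + (-1:ℂ) * ζ^5 + (2:ℂ) * ζ^7 + (-1:ℂ) * ζ^8 + (-1:ℂ)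 * ζ^10 + (2:ℂ) * ζ^11 + (-1:ℂ) * ζ^13 + (1:ℂ) * ζ^14) + (x 2 * x 8) * ((2:ℂ) + (-2:ℂ) * ζ + (1:ℂ) * ζ^3 + (-1:ℂ) * ζ^4 + (1:ℂ) * ζ^6 + (-1:ℂ) * ζ^7 + (2:ℂ) * ζ^9 + (-1:ℂ) * ζ^11 + (1:ℂ) * ζ^12 + (-1:ℂ) * ζ^14 + (1:ℂ) * ζ^15) + (x 3 * x 3) * ((1:ℂ) + (-1:ℂ) * ζ + (1:ℂ) * ζ^5 + (-1:ℂ) * ζ^6 + (1:ℂ) * ζ^8 + (-1:ℂ) * ζ^9 + (1:ℂ) * ζ^10 + (-1:ℂ) * ζ^12 + (1:ℂ) * ζ^13) + (x 3 * x 4) * ((2:ℂ) + (-2:ℂ) * ζ + (1:ℂ) * ζ^5 + (1:ℂ) * ζ^13) + (x 3 * x 5) * ((2:ℂ) + (-2:ℂ) * ζ + (1:ℂ) * ζ^3 + (-1:ℂ) * ζ^4 + (1:ℂ) * ζ^6 + (-1:ℂ) * ζ^7 + (2:ℂ) * ζ^9 + (-1:ℂ) * ζ^11 + (1:ℂ)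 * ζ^12 + (-1:ℂ) * ζ^14 + (1:ℂ) * ζ^15) + (x 3 * x 6) * ((2:ℂ) + (-2:ℂ) * ζ + (1:ℂ) * ζ^4 + (-1:ℂ) * ζ^5 + (2:ℂ) * ζ^7 + (-1:ℂ) * ζ^8 + (-1:ℂ) * ζ^10 + (2:ℂ) * ζ^11 + (-1:ℂ) * ζ^13 + (1:ℂ) * ζ^14) + (x 3 * x 7) * ((-15:ℂ) + (15:ℂ) * ζ + (1:ℂ) * ζ^2 + (-1:ℂ) * ζ^3 + (1:ℂ) * ζ^4 + (-1:ℂ) * ζ^5 + (1:ℂ) * ζ^6 + (-1:ℂ) * ζ^7 + (1:ℂ) * ζ^8 + (-1:ℂ) * ζ^9 + (1:ℂ) * ζ^10 + (-1:ℂ) * ζ^11 + (1:ℂ) * ζ^12 + (-1:ℂ) * ζ^13 + (1:ℂ) * ζ^14 + (-1:ℂ) * ζ^15 + (1:ℂ) * ζ^16) + (x 3 * x 8) * ((2:ℂ) + (-2:ℂ) * ζ + (1:ℂ) * ζ^4 + (-1:ℂ) * ζ^5 + (2:ℂ) * ζ^7 + (-1:ℂ) * ζ^8 + (-1:ℂ)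 * ζ^10 + (2:ℂ) * ζ^11 + (-1:ℂ) * ζ^13 + (1:ℂ) * ζ^14) + (x 4 * x 4) * ((1:ℂ) + (-1:ℂ) * ζ + (1:ℂ) * ζ^5 + (-1:ℂ) * ζ^6 + (1:ℂ) * ζ^8 + (-1:ℂ) * ζ^9 + (1:ℂ) * ζ^10 + (-1:ℂ) * ζ^12 + (1:ℂ) * ζ^13) + (x 4 * x 5) * ((2:ℂ) + (-2:ℂ) * ζ + (1:ℂ) * ζ^5 + (1:ℂ) * ζ^13) + (x 4 * x 6) * ((2:ℂ) + (-2:ℂ) * ζ + (1:ℂ) * ζ^3 + (-1:ℂ) * ζ^4 + (1:ℂ) * ζ^6 + (-1:ℂ) * ζ^7 + (2:ℂ) * ζ^9 + (-1:ℂ) * ζ^11 + (1:ℂ) * ζ^12 + (-1:ℂ) * ζ^14 + (1:ℂ) * ζ^15) + (x 4 * x 7) * ((2:ℂ) + (-2:ℂ) * ζ + (1:ℂ) * ζ^4 + (-1:ℂ) * ζ^5 + (2:ℂ) * ζ^7 + (-1:ℂ) * ζ^8 + (-1:ℂ) * ζ^10 + (2:ℂ) * ζ^11 + (-1:ℂ)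 * ζ^13 + (1:ℂ) * ζ^14) + (x 4 * x 8) * ((-15:ℂ) + (15:ℂ) * ζ + (1:ℂ) * ζ^2 + (-1:ℂ) * ζ^3 + (1:ℂ) * ζ^4 + (-1:ℂ) * ζ^5 + (1:ℂ) * ζ^6 + (-1:ℂ) * ζ^7 + (1:ℂ) * ζ^8 + (-1:ℂ) * ζ^9 + (1:ℂ) * ζ^10 + (-1:ℂ) * ζ^11 + (1:ℂ) * ζ^12 + (-1:ℂ) * ζ^13 + (1:ℂ) * ζ^14 + (-1:ℂ) * ζ^15 + (1:ℂ) * ζ^16) + (x 5 * x 5) * ((1:ℂ) + (-1:ℂ) * ζ + (1:ℂ) * ζ^5 + (-1:ℂ) * ζ^6 + (1:ℂ) * ζ^8 + (-1:ℂ) * ζ^9 + (1:ℂ) * ζ^10 + (-1:ℂ) * ζ^12 + (1:ℂ) * ζ^13) + (x 5 * x 6) * ((2:ℂ) + (-2:ℂ) * ζ + (1:ℂ) * ζ^5 + (1:ℂ) * ζ^13) + (x 5 * x 7) * ((2:ℂ) + (-2:ℂ) * ζ + (1:ℂ) * ζ^3 + (-1:ℂ) * ζ^4 + (1:ℂ)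 * ζ^6 + (-1:ℂ) * ζ^7 + (2:ℂ) * ζ^9 + (-1:ℂ) * ζ^11 + (1:ℂ) * ζ^12 + (-1:ℂ) * ζ^14 + (1:ℂ) * ζ^15) + (x 5 * x 8) * ((2:ℂ) + (-2:ℂ) * ζ + (1:ℂ) * ζ^4 + (-1:ℂ) * ζ^5 + (2:ℂ) * ζ^7 + (-1:ℂ) * ζ^8 + (-1:ℂ) * ζ^10 + (2:ℂ) * ζ^11 + (-1:ℂ) * ζ^13 + (1:ℂ) * ζ^14) + (x 6 * x 6) * ((1:ℂ) + (-1:ℂ) * ζ + (1:ℂ) * ζ^5 + (-1:ℂ) * ζ^6 + (1:ℂ) * ζ^8 + (-1:ℂ) * ζ^9 + (1:ℂ) * ζ^10 + (-1:ℂ) * ζ^12 + (1:ℂ) * ζ^13) + (x 6 * x 7) * ((2:ℂ) + (-2:ℂ) * ζ + (1:ℂ) * ζ^5 + (1:ℂ) * ζ^13) + (x 6 * x 8) * ((2:ℂ) + (-2:ℂ) * ζ + (1:ℂ) * ζ^3 + (-1:ℂ) * ζ^4 + (1:ℂ) * ζ^6 + (-1:ℂ) * ζ^7 + (2:ℂ)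 * ζ^9 + (-1:ℂ) * ζ^11 + (1:ℂ) * ζ^12 + (-1:ℂ) * ζ^14 + (1:ℂ) * ζ^15) + (x 7 * x 7) * ((1:ℂ) + (-1:ℂ) * ζ + (1:ℂ) * ζ^5 + (-1:ℂ) * ζ^6 + (1:ℂ) * ζ^8 + (-1:ℂ) * ζ^9 + (1:ℂ) * ζ^10 + (-1:ℂ) * ζ^12 + (1:ℂ) * ζ^13) + (x 7 * x 8) * ((2:ℂ) + (-2:ℂ) * ζ + (1:ℂ) * ζ^5 + (1:ℂ) * ζ^13) + (x 8 * x 8) * ((1:ℂ) + (-1:ℂ) * ζ + (1:ℂ) * ζ^5 + (-1:ℂ) * ζ^6 + (1:ℂ) * ζ^8 + (-1:ℂ) * ζ^9 + (1:ℂ) * ζ^10 + (-1:ℂ) * ζ^12 + (1:ℂ) * ζ^13)) * hS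
  rw [m0, m1, m2, m3, m4, m5, m6, m7, m8]
  linear_combination (((-1:ℂ)/(Real.sqrt 17:ℂ)))^2 * key + 17 * ((x 0)^2 + (x 1) * (x 5) + (x 2) * (x 6) + (x 3) * (x 7) + (x 4) * (x 8)) * hr2
end

section
/- Let K be a field and T, u₁, u₂, u₃, u₄ ∈ K with u₂ ≠ 0 and u₄ ≠ 0. Suppose u₁u₂ + u₁u₃ + (T+1)u₂² − u₃u₄ = 0 and u₁u₄ + Tu₂² − T²u₂u₄ − Tu₃u₄ = 0. Set x = −Tu₁/u₄ and y = Tu₁(u₁ − u₂ − u₄)/(u₂u₄). Then y² + (T+1)(T−2)xy + T³y = x³ − x². -/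
/-- The map from the symplectic quadric intersection to the Weierstrass curve
`y² + (T+1)(T−2)xy + T³y = x³ − x²`. -/
theorem symplectic_quadrics_to_weierstrass (K : Type*) [Field K]
    (T u₁ u₂ u₃ u₄ : K) (h₂ : u₂ ≠ 0) (h₄ : u₄ ≠ 0)
    (e1 : u₁*u₂ + u₁*u₃ + (T+1)*u₂^2 - u₃*u₄ = 0)
    (e2 : u₁*u₄ + T*u₂^2 - T^2*u₂*u₄ - T*u₃*u₄ = 0)
    (x y : K) (hx : x = -T*u₁/u₄) (hy : y = T*u₁*(u₁ - u₂ - u₄)/(u₂*u₄)) :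
    y^2 + (T+1)*(T-2)*x*y + T^3*y = x^3 - x^2 := by
  have hx' : x * u₄ = -(T*u₁) := by rw [hx]; field_simp
  have hy' : y * (u₂*u₄) = T*u₁*(u₁ - u₂ - u₄) := by
    rw [hy]; field_simp
  have hden : (u₂^2*u₄^3 : K) ≠ 0 := mul_ne_zero (pow_ne_zero _ h₂) (pow_ne_zero _ h₄)
  have key : (y^2 + (T+1)*(T-2)*x*y + T^3*y - (x^3 - x^2)) * (u₂^2*u₄^3) = 0 := by
    linear_combination
      (-2*u₂^2*u₄^2*y + u₂^2*u₄^2*x - u₂^2*u₄^2*x^2 - T*u₂^2*u₄^2*y - T*u₁*u₂^2*u₄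
        + T*u₁*u₂^2*u₄*x + T^2*u₂^2*u₄^2*y - T^2*u₁^2*u₂^2) * hx' +
      (u₂*u₄^2*y - T*u₁*u₄^2 + T*u₁*u₂*u₄ + T*u₁^2*u₄ + T^2*u₁*u₂*u₄ + T^3*u₂*u₄^2
        - T^3*u₁*u₂*u₄) * hy' +
      (-(T^3*u₁*u₄^2) + T^3*u₁^2*u₄) * e1 +
      (T^2*u₁*u₄^2 - 2*T^2*u₁^2*u₄ + T^2*u₁^3) * e2
  rcases mul_eq_zero.mp key with h | h
  · exact sub_eq_zero.mp h
  · exact absurd h hden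
end

section
/- Let K be a field and T, u₁, u₂, u₃, u₄ ∈ K with u₁ ≠ 0 and u₄ ≠ 0. Suppose u₁² + Tu₁u₂ + Tu₂u₃ − Tu₁u₄ = 0 and u₁u₃ + Tu₁u₄ + u₂u₄ + u₃u₄ = 0. Set x = T(u₁ + Tu₂)/u₄ and y = T(u₁ + Tu₂)²/(u₁u₄). Then y² + (T+1)(T−2)xy + T³y = x³ − x². -/
/-- The map from the anti-symplectic quadric intersection to the Weierstrass
curve `y² + (T+1)(T−2)xy + T³y = x³ − x²`. -/
theorem antisymplectic_quadrics_to_weierstrass (K : Type*) [Field K]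
    (T u₁ u₂ u₃ u₄ : K) (h₁ : u₁ ≠ 0) (h₄ : u₄ ≠ 0)
    (e1 : u₁^2 + T*u₁*u₂ + T*u₂*u₃ - T*u₁*u₄ = 0)
    (e2 : u₁*u₃ + T*u₁*u₄ + u₂*u₄ + u₃*u₄ = 0)
    (x y : K) (hx : x = T*(u₁ + T*u₂)/u₄) (hy : y = T*(u₁ + T*u₂)^2/(u₁*u₄)) :
    y^2 + (T+1)*(T-2)*x*y + T^3*y = x^3 - x^2 := by
  rw [eq_div_iff h₄] at hx
  rw [eq_div_iff (mul_ne_zero h₁ h₄)] at hy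
  have hm : u₁^2*u₄^3 ≠ 0 := by simp [h₁, h₄, pow_ne_zero]
  have key : (y^2 + (T+1)*(T-2)*x*y + T^3*y) * (u₁^2*u₄^3)
      = (x^3 - x^2) * (u₁^2*u₄^3) := by
    linear_combination
      (-(T^3*(u₁+T*u₂)^2*(u₁+u₄))) * e1 + (T^4*u₂*(u₁+T*u₂)^2) * e2 +
      (T*u₁^3*u₄ + T^2*u₁^2*u₂*u₄ - T^2*u₁^4 - 2*T^3*u₁^3*u₂ - T^4*u₁^2*u₂^2
        - 2*y*u₁^2*u₄^2 - y*T*u₁^2*u₄^2 + y*T^2*u₁^2*u₄^2 + x*u₁^2*u₄^2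
        - x*T*u₁^3*u₄ - x*T^2*u₁^2*u₂*u₄ - x^2*u₁^2*u₄^2) * hx +
      (-(T*u₁^2*u₄) - T^2*u₁^2*u₄ + T^3*u₂^2*u₄ + T^3*u₁*u₄^2 - T^3*u₁*u₂*u₄
        + T^3*u₁^2*u₄ + T^4*u₁*u₂*u₄ + y*u₁*u₄^2) * hy
  exact mul_right_cancel₀ hm key
end
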